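/- Let (X, ρ, μ) be a doubling metric measure space, M a complete metric space, C ⊆ X nonempty closed, and f : C → M any function. Define the extension f̃ : X → M by f̃(x) = f(x) for x ∈ C and f̃(x) = f(y) for any chosen y ∈ C with ρ(x,y) < 2·dist(x, C) when x ∉ C. Then for every x ∈ C at which f is pointwise Lipschitz (Lf f(x) < ∞), the extension satisfies Lf f̃(x) ≤ 3·Lf f(x) < ∞; in particular A_f ⊆ A_{f̃}. -/

import Mathlib

open Metric MeasureTheory Set Filter Topology ENNReal NNReal

/-- Pointwise upper Lipschitz constant of `f` relative to `A` at `x`: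
`Lf f(x) = limsup_{y ∈ A → x} d(f y, f x)/ρ(y, x)` (valued in `ℝ≥0∞`). -/
noncomputable def Lf {X M : Type*} [MetricSpace X] [MetricSpace M]
    (A : Set X) (f : X → M) (x : X) : ℝ≥0∞ :=
  Filter.limsup (fun y => ENNReal.ofReal (dist (f y) (f x) / dist y x))
    (nhdsWithin x (A \ {x}))

/-- the near-optimal-projection extension `f̃` of a function `f` on a closed set
`C` satisfies `Lf f̃(x) ≤ 3 · Lf f(x) < ∞` at every `x ∈ C` where `f` is pointwise Lipschitz;
in particular `A_f ⊆ A_{f̃}`. -/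
theorem stmt11 {X M : Type*} [MetricSpace X] [MetricSpace M] [CompleteSpace M]
    (C : Set X) (hC : IsClosed C) (hCne : C.Nonempty)
    (f ftilde : X → M)
    (heq : ∀ x ∈ C, ftilde x = f x)
    (hext : ∀ x ∉ C, ∃ y ∈ C, dist x y < 2 * Metric.infDist x C ∧ ftilde x = f y)
    (x : X) (hx : x ∈ C) (hfin : Lf C f x < ⊤) :
    Lf Set.univ ftilde x ≤ 3 * Lf C f x ∧ Lf Set.univ ftilde x < ⊤ := by
  set L := Lf C f x with hLdef
  have key : ∀ b : ℝ≥0∞, L < b → Lf Set.univ ftilde x ≤ 3 * b := by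
    intro b hb
    have hev : ∀ᶠ u in nhdsWithin x (C \ {x}),
        ENNReal.ofReal (dist (f u) (f x) / dist u x) < b :=
      Filter.eventually_lt_of_limsup_lt hb
    obtain ⟨δ, hδ, hδsub⟩ := Metric.mem_nhdsWithin_iff.mp hev
    have hev2 : ∀ᶠ y in nhdsWithin x (Set.univ \ {x}),
        ENNReal.ofReal (dist (ftilde y) (ftilde x) / dist y x) ≤ 3 * b := by
      rw [Filter.eventually_iff]
      refine Metric.mem_nhdsWithin_iff.mpr ⟨δ/3, by positivity, ?_⟩
      rintro y ⟨hyb, -, hyx⟩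
      simp only [Set.mem_setOf_eq] at hyx ⊢
      have hyx' : y ≠ x := hyx
      have hdyx : (0:ℝ) < dist y x := dist_pos.mpr hyx'
      have hyb' : dist y x < δ/3 := by simpa [Metric.mem_ball] using hyb
      rw [heq x hx]
      by_cases hyC : y ∈ C
      · rw [heq y hyC]
        have h1 := hδsub ⟨Metric.mem_ball.mpr (by linarith), hyC, hyx⟩
        exact h1.le.trans (le_mul_of_one_le_left (by positivity) (by norm_num))
      · obtain ⟨z, hzC, hzd, hfz⟩ := hext y hyC
        rw [hfz]
        have hinf : Metric.infDist y C ≤ dist y x := Metric.infDist_le_dist_of_mem hx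
        have hzy : dist y z < 2 * dist y x := hzd.trans_le (by linarith)
        by_cases hzx : z = x
        · subst hzx; simp
        · have hzy' : dist z y < 2 * dist y x := by rw [dist_comm]; exact hzy
          have htri : dist z x ≤ dist z y + dist y x := dist_triangle z y x
          have h3 : dist z x ≤ 3 * dist y x := by linarith
          have hzball : z ∈ Metric.ball x δ ∩ (C \ {x}) :=
            ⟨Metric.mem_ball.mpr (by linarith), hzC, hzx⟩
          have h1 := hδsub hzball
          have hdzx : (0:ℝ) < dist z x := dist_pos.mpr hzx
          have hratio : dist (f z) (f x) / dist y x ≤ 3 * (dist (f z) (f x) / dist z x) := by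
            rw [← mul_div_assoc, div_le_div_iff₀ hdyx hdzx]
            nlinarith [dist_nonneg (x := f z) (y := f x)]
          calc ENNReal.ofReal (dist (f z) (f x) / dist y x)
              ≤ ENNReal.ofReal (3 * (dist (f z) (f x) / dist z x)) :=
                ENNReal.ofReal_le_ofReal hratio
            _ = 3 * ENNReal.ofReal (dist (f z) (f x) / dist z x) := by
                rw [ENNReal.ofReal_mul (by norm_num)]; norm_num
            _ ≤ 3 * b := by gcongr; exact h1.le
    exact Filter.limsup_le_of_le (by isBoundedDefault) hev2
  constructor
  · refine ENNReal.le_of_forall_pos_le_add fun ε hε _ => ?_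
    have hpos : (0:ℝ≥0) < ε / 3 := by positivity
    have hb : L < L + ((ε/3 : ℝ≥0) : ℝ≥0∞) :=
      ENNReal.lt_add_right hfin.ne (by exact_mod_cast hpos.ne')
    have h := key _ hb
    have heq3 : (3:ℝ≥0∞) * (L + ((ε/3 : ℝ≥0) : ℝ≥0∞)) = 3 * L + (ε : ℝ≥0∞) := by
      rw [mul_add]
      congr 1
      rw [show ((3:ℝ≥0∞)) = ((3:ℝ≥0):ℝ≥0∞) by norm_cast, ← ENNReal.coe_mul]
      congr 1
      field_simp
    rw [heq3] at h
    exact h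
  · have h := key (L + 1) (ENNReal.lt_add_right hfin.ne one_ne_zero)
    exact lt_of_le_of_lt h (ENNReal.mul_lt_top (by norm_num)
      (by simp [ENNReal.add_lt_top, hfin, ENNReal.one_lt_top]))
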